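/- Let D be a direct sum of chains with only finitely many non-trivial (i.e., size > 1) components. If every component of D has exactly one sibling up to isomorphism, then D has exactly one sibling up to isomorphism. -/

import Mathlib

open Cardinal

/-- Two preorders are equimorphic (siblings) if each order-embeds into the other. -/
def Equimorphic (α : Type*) (β : Type*) [Preorder α] [Preorder β] : Prop :=
  Nonempty (α ↪o β) ∧ Nonempty (β ↪o α)

/-- The setoid identifying order-isomorphic equimorphic substructures. -/
def sibSetoid (α : Type*) [Preorder α] : Setoid {S : Set α // Equimorphic S α} :=
  ⟨fun S T => Nonempty ((S : Set α) ≃o (T : Set α)),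
    ⟨fun _ => ⟨OrderIso.refl _⟩, fun ⟨e⟩ => ⟨e.symm⟩, fun ⟨e⟩ ⟨f⟩ => ⟨e.trans f⟩⟩⟩

/-- The sibling number of a structure: the number of isomorphism classes of
substructures equimorphic to it (every sibling is isomorphic to such a substructure). -/
noncomputable def sibNumber (α : Type*) [Preorder α] : Cardinal :=
  #(Quotient (sibSetoid α))

lemma equimorphic_univ (α : Type*) [Preorder α] : Equimorphic (Set.univ : Set α) α :=
  ⟨⟨(OrderIso.Set.univ).toOrderEmbedding⟩, ⟨(OrderIso.Set.univ).symm.toOrderEmbedding⟩⟩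

lemma sibNumber_eq_one_iff {α : Type*} [Preorder α] :
    sibNumber α = 1 ↔ ∀ S : Set α, Equimorphic S α → Nonempty ((S : Set α) ≃o α) := by
  rw [sibNumber, Cardinal.eq_one_iff_unique]
  constructor
  · rintro ⟨hsub, -⟩ S hS
    have h : (Quotient.mk (sibSetoid α) ⟨S, hS⟩) =
        Quotient.mk (sibSetoid α) ⟨Set.univ, equimorphic_univ α⟩ := Subsingleton.elim _ _
    obtain ⟨e⟩ := Quotient.exact h
    exact ⟨e.trans OrderIso.Set.univ⟩
  · intro h
    refine ⟨⟨fun a b => ?_⟩, ⟨Quotient.mk _ ⟨Set.univ, equimorphic_univ α⟩⟩⟩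
    induction a using Quotient.ind
    induction b using Quotient.ind
    rename_i a b
    obtain ⟨ea⟩ := h a.1 a.2
    obtain ⟨eb⟩ := h b.1 b.2
    exact Quotient.sound ⟨ea.trans eb.symm⟩

/-- An order iso between two nonempty subsingleton preorders. -/
noncomputable def orderIsoOfSubsingleton (α β : Type*) [Preorder α] [Preorder β]
    [Subsingleton α] [Subsingleton β] [Nonempty α] [Nonempty β] : α ≃o β := by
  haveI : Unique α := uniqueOfSubsingleton (Classical.arbitrary α)
  haveI : Unique β := uniqueOfSubsingleton (Classical.arbitrary β)
  exact ⟨Equiv.ofUnique α β, by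
    intro a b
    rw [Subsingleton.elim a b]
    exact iff_of_true le_rfl le_rfl⟩

section Main

variable {I : Type} {C : I → Type} [∀ i, LinearOrder (C i)] [∀ i, Nonempty (C i)]

lemma sigma_eta {j : I} (a : Σ i, C i) (h : a.1 = j) :
    (⟨j, h ▸ a.2⟩ : Σ i, C i) = a := by
  cases a; cases h; rfl

lemma fst_eq_of_le {a b : Σ i, C i} (h : a ≤ b) : a.1 = b.1 :=
  (Sigma.le_def.mp h).1

lemma comparable_of_fst_eq {a b : Σ i, C i} (h : a.1 = b.1) : a ≤ b ∨ b ≤ a := by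
  obtain ⟨i, x⟩ := a
  obtain ⟨j, y⟩ := b
  cases h
  rcases le_total x y with h' | h'
  · exact Or.inl (Sigma.mk_le_mk_iff.2 h')
  · exact Or.inr (Sigma.mk_le_mk_iff.2 h')

theorem sib_one_of_finitely_many_nontrivial (I : Type) (C : I → Type)
    [∀ i, LinearOrder (C i)] [∀ i, Nonempty (C i)]
    (hfin : {i | Nontrivial (C i)}.Finite)
    (hone : ∀ i, sibNumber (C i) = 1) :
    sibNumber (Σ i, C i) = 1 := by
  classical
  have P : ∀ i, ∀ T : Set (C i), Equimorphic T (C i) → Nonempty ((T : Set (C i)) ≃o C i) :=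
    fun i => sibNumber_eq_one_iff.mp (hone i)
  rw [sibNumber_eq_one_iff]
  intro S hS
  obtain ⟨-, ⟨f⟩⟩ := hS
  -- the composed self-embedding
  set F : (Σ i, C i) ↪o (Σ i, C i) := f.trans (OrderEmbedding.subtype _) with hF
  have hFval : ∀ p : Σ i, C i, F p = (f p).val := fun p => rfl
  -- each component maps into a single component
  have hfst : ∀ i (x y : C i), (F ⟨i, x⟩).1 = (F ⟨i, y⟩).1 := by
    intro i x y
    rcases le_total x y with h | h
    · exact fst_eq_of_le (F.monotone (Sigma.mk_le_mk_iff.2 h))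
    · exact (fst_eq_of_le (F.monotone (Sigma.mk_le_mk_iff.2 h))).symm
  set σ : I → I := fun i => (F ⟨i, Classical.arbitrary (C i)⟩).1 with hσdef
  have hσ : ∀ i (x : C i), (F ⟨i, x⟩).1 = σ i := fun i x => hfst i x _
  have hσinj : Function.Injective σ := by
    intro i j h
    have hcomp : (F ⟨i, Classical.arbitrary (C i)⟩).1 = (F ⟨j, Classical.arbitrary (C j)⟩).1 := h
    rcases comparable_of_fst_eq hcomp with h' | h'
    · exact fst_eq_of_le (F.le_iff_le.mp h')
    · exact (fst_eq_of_le (F.le_iff_le.mp h')).symm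
  -- component sets of S
  set T : ∀ j : I, Set (C j) := fun j => {y | (⟨j, y⟩ : Σ i, C i) ∈ S} with hT
  -- embedding of C i into the (σ i)-th component of S
  have embT : ∀ i, Nonempty (C i ↪o (T (σ i) : Set (C (σ i)))) := by
    intro i
    have hmem : ∀ x : C i, (hσ i x ▸ (F ⟨i, x⟩).2 : C (σ i)) ∈ T (σ i) := by
      intro x
      show (⟨σ i, hσ i x ▸ (F ⟨i, x⟩).2⟩ : Σ i, C i) ∈ S
      rw [sigma_eta (F ⟨i, x⟩) (hσ i x)]
      exact (f ⟨i, x⟩).2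
    refine ⟨OrderEmbedding.ofMapLEIff (fun x => ⟨hσ i x ▸ (F ⟨i, x⟩).2, hmem x⟩) ?_⟩
    intro a b
    rw [Subtype.mk_le_mk, ← Sigma.mk_le_mk_iff (i := σ i),
      sigma_eta (F ⟨i, a⟩) (hσ i a), sigma_eta (F ⟨i, b⟩) (hσ i b), F.le_iff_le,
      Sigma.mk_le_mk_iff]
  have embC : ∀ i, Nonempty (C i ↪o C (σ i)) := by
    intro i
    obtain ⟨e⟩ := embT i
    exact ⟨e.trans (OrderEmbedding.subtype _)⟩
  -- the set of nontrivial indices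
  set NT : Set I := {i | Nontrivial (C i)} with hNT
  haveI : Finite NT := hfin.to_subtype
  have hσNT : ∀ i ∈ NT, σ i ∈ NT := by
    intro i hi
    obtain ⟨e⟩ := embC i
    haveI : Nontrivial (C i) := hi
    exact e.injective.nontrivial
  set σ' : NT → NT := fun i => ⟨σ i.1, hσNT i.1 i.2⟩ with hσ'
  have hσ'inj : Function.Injective σ' := by
    intro a b h
    exact Subtype.ext (hσinj (congrArg Subtype.val h))
  have hσ'bij : Function.Bijective σ' := Finite.injective_iff_bijective.mp hσ'inj
  have hσ'val : ∀ (k : ℕ) (x : NT), (σ'^[k] x).1 = σ^[k] x.1 := by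
    intro k
    induction k with
    | zero => intro x; rfl
    | succ n ih =>
      intro x
      rw [Function.iterate_succ_apply', Function.iterate_succ_apply']
      show σ (σ'^[n] x).1 = σ (σ^[n] x.1)
      exact congrArg σ (ih x)
  -- every nontrivial index returns to itself under iteration of σ
  have hfix : ∀ i ∈ NT, ∃ k, 0 < k ∧ σ^[k] i = i := by
    intro i hi
    obtain ⟨m, n, hmn, heq⟩ :=
      Finite.exists_ne_map_eq_of_infinite (fun k : ℕ => σ'^[k] ⟨i, hi⟩)
    rcases hmn.lt_or_gt with h | h
    · refine ⟨n - m, by omega, ?_⟩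
      have h2 : σ'^[m] (σ'^[n - m] ⟨i, hi⟩) = σ'^[m] ⟨i, hi⟩ := by
        rw [← Function.iterate_add_apply, show m + (n - m) = n by omega, heq]
      have h3 := (hσ'inj.iterate m) h2
      have := congrArg Subtype.val h3
      rwa [hσ'val] at this
    · refine ⟨m - n, by omega, ?_⟩
      have h2 : σ'^[n] (σ'^[m - n] ⟨i, hi⟩) = σ'^[n] ⟨i, hi⟩ := by
        rw [← Function.iterate_add_apply, show n + (m - n) = m by omega, heq]
      have h3 := (hσ'inj.iterate n) h2
      have := congrArg Subtype.val h3
      rwa [hσ'val] at this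
  -- iterated embeddings
  have embIter : ∀ (n : ℕ) (j : I), Nonempty (C j ↪o C (σ^[n] j)) := by
    intro n
    induction n with
    | zero => intro j; exact ⟨(OrderIso.refl (C j)).toOrderEmbedding⟩
    | succ m ih =>
      intro j
      obtain ⟨e⟩ := embC j
      obtain ⟨e'⟩ := ih (σ j)
      rw [Function.iterate_succ_apply]
      exact ⟨e.trans e'⟩
  have embback : ∀ i ∈ NT, Nonempty (C (σ i) ↪o C i) := by
    intro i hi
    obtain ⟨k, hk, hfixk⟩ := hfix i hi
    obtain ⟨k', rfl⟩ : ∃ k', k = k' + 1 := ⟨k - 1, by omega⟩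
    obtain ⟨e⟩ := embIter k' (σ i)
    rw [← Function.iterate_succ_apply, hfixk] at e
    exact ⟨e⟩
  -- each nontrivial component of S is isomorphic to the corresponding chain
  have isoNT : ∀ j ∈ NT, Nonempty ((T j : Set (C j)) ≃o C j) := by
    intro j hj
    obtain ⟨⟨i, hi⟩, hij⟩ := hσ'bij.surjective ⟨j, hj⟩
    have hij' : σ i = j := congrArg Subtype.val hij
    subst hij'
    obtain ⟨e1⟩ := embback i hi
    obtain ⟨e2⟩ := embT i
    exact P (σ i) (T (σ i)) ⟨⟨OrderEmbedding.subtype _⟩, ⟨e1.trans e2⟩⟩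
  -- the set of indices with nonempty components of S
  set J : Set I := {j | (T j).Nonempty} with hJ
  have hσJ : ∀ i, σ i ∈ J := by
    intro i
    obtain ⟨e⟩ := embT i
    exact ⟨(e (Classical.arbitrary (C i))).1, (e (Classical.arbitrary (C i))).2⟩
  have hNTJ : ∀ j ∈ NT, j ∈ J := by
    intro j hj
    obtain ⟨e⟩ := isoNT j hj
    exact ⟨(e.symm (Classical.arbitrary (C j))).1, (e.symm (Classical.arbitrary (C j))).2⟩
  have hσtriv : ∀ i, i ∉ NT → σ i ∉ NT := by
    intro i hi hσi
    obtain ⟨⟨i', hi'⟩, hii'⟩ := hσ'bij.surjective ⟨σ i, hσi⟩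
    have : σ i' = σ i := congrArg Subtype.val hii'
    exact hi (hσinj this ▸ hi')
  -- Schröder–Bernstein between trivial parts
  have emb1 : (NTᶜ : Set I) ↪ (J \ NT : Set I) := by
    refine ⟨fun i => ⟨σ i.1, hσJ i.1, hσtriv i.1 i.2⟩, ?_⟩
    intro a b h
    simp only [Subtype.mk.injEq] at h
    exact Subtype.ext (hσinj (congrArg Subtype.val h))
  have emb2 : (J \ NT : Set I) ↪ (NTᶜ : Set I) := by
    refine ⟨fun j => ⟨j.1, j.2.2⟩, ?_⟩
    intro a b h
    simp only [Subtype.mk.injEq] at h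
    exact Subtype.ext h
  obtain ⟨eqv⟩ := Function.Embedding.antisymm emb1 emb2
  -- the index bijection
  set β : I → I := fun i => if h : i ∈ NT then i else (eqv ⟨i, h⟩).1 with hβ
  have hβnt : ∀ i ∈ NT, β i = i := fun i hi => dif_pos hi
  have hβt : ∀ (i) (h : i ∉ NT), β i = (eqv ⟨i, h⟩).1 := fun i h => dif_neg h
  have hβtmem : ∀ (i) (h : i ∉ NT), β i ∈ J \ NT := by
    intro i h; rw [hβt i h]; exact (eqv ⟨i, h⟩).2
  have hβJ : ∀ i, β i ∈ J := by
    intro i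
    by_cases h : i ∈ NT
    · rw [hβnt i h]; exact hNTJ i h
    · exact (hβtmem i h).1
  have hβinj : Function.Injective β := by
    intro a b h
    by_cases ha : a ∈ NT <;> by_cases hb : b ∈ NT
    · rwa [hβnt a ha, hβnt b hb] at h
    · exact absurd (hβnt a ha ▸ h ▸ (hβtmem b hb).2) (fun h' => h' ha)
    · exact absurd (hβnt b hb ▸ h ▸ (hβtmem a ha).2) (fun h' => h' hb)
    · rw [hβt a ha, hβt b hb] at h
      exact congrArg Subtype.val (eqv.injective (Subtype.ext h))
  have hβsurj : ∀ j ∈ J, ∃ i, β i = j := by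
    intro j hj
    by_cases h : j ∈ NT
    · exact ⟨j, hβnt j h⟩
    · refine ⟨(eqv.symm ⟨j, hj, h⟩).1, ?_⟩
      rw [hβt _ (eqv.symm ⟨j, hj, h⟩).2]
      have : eqv ⟨(eqv.symm ⟨j, hj, h⟩).1, (eqv.symm ⟨j, hj, h⟩).2⟩ = ⟨j, hj, h⟩ := by
        rw [Subtype.eta]; exact eqv.apply_symm_apply _
      rw [this]
  -- component isomorphisms
  have isoβ : ∀ i, Nonempty (C i ≃o (T (β i) : Set (C (β i)))) := by
    intro i
    by_cases h : i ∈ NT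
    · rw [hβnt i h]
      obtain ⟨e⟩ := isoNT i h
      exact ⟨e.symm⟩
    · have h1 : β i ∈ J \ NT := hβtmem i h
      haveI : Subsingleton (C i) := not_nontrivial_iff_subsingleton.mp h
      haveI : Subsingleton (C (β i)) := not_nontrivial_iff_subsingleton.mp h1.2
      haveI : Subsingleton (T (β i) : Set (C (β i))) := ⟨fun a b => Subtype.ext (Subsingleton.elim _ _)⟩
      haveI : Nonempty (T (β i) : Set (C (β i))) := by
        obtain ⟨y, hy⟩ := hβJ i
        exact ⟨⟨y, hy⟩⟩
      exact ⟨orderIsoOfSubsingleton _ _⟩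
  set iso : ∀ i, C i ≃o (T (β i) : Set (C (β i))) := fun i => (isoβ i).some with hiso
  -- the final map
  set G : (Σ i, C i) → S := fun p => ⟨⟨β p.1, (iso p.1 p.2).1⟩, (iso p.1 p.2).2⟩ with hG
  have hGle : ∀ p q, G p ≤ G q ↔ p ≤ q := by
    rintro ⟨i, x⟩ ⟨j, y⟩
    show (⟨β i, (iso i x).1⟩ : Σ i, C i) ≤ ⟨β j, (iso j y).1⟩ ↔ _
    by_cases hij : i = j
    · subst hij
      rw [Sigma.mk_le_mk_iff, Sigma.mk_le_mk_iff, Subtype.coe_le_coe, (iso i).le_iff_le]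
    · constructor
      · intro h
        exact absurd (hβinj (fst_eq_of_le h)) hij
      · intro h
        exact absurd (fst_eq_of_le h) hij
  have hGinj : Function.Injective G := by
    intro p q h
    exact le_antisymm ((hGle p q).mp h.le) ((hGle q p).mp h.ge)
  have hGsurj : Function.Surjective G := by
    rintro ⟨⟨j, y⟩, hy⟩
    have hj : j ∈ J := ⟨y, hy⟩
    obtain ⟨i, rfl⟩ := hβsurj j hj
    refine ⟨⟨i, (iso i).symm ⟨y, hy⟩⟩, ?_⟩
    apply Subtype.ext
    show (⟨β i, (iso i ((iso i).symm ⟨y, hy⟩)).1⟩ : Σ i, C i) = ⟨β i, y⟩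
    rw [(iso i).apply_symm_apply]
  exact ⟨(RelIso.mk (Equiv.ofBijective G ⟨hGinj, hGsurj⟩) (fun {a b} => hGle a b)).symm⟩

end Main
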